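/- Let P and Q be probability distributions such that there is an event B with Pr_P[B] ≤ δ and such that the conditional distributions P | Bᶜ and Q | Bᶜ satisfy e^{-ε} ≤ Pr_{P|Bᶜ}[S] / Pr_{Q|Bᶜ}[S] ≤ e^{ε} for all events S (i.e., they are (ε,0)-indistinguishable). Then for every event S, Pr_P[S] ≤ e^{ε}·Pr_Q[S] + δ. -/
import Mathlib

open MeasureTheory ProbabilityTheory

/-- Suppose `P` and `Q` are probability measures, `B` is an event with `Pr_P[B] ≤ δ`,
and the restrictions of `P` and `Q` to `Bᶜ` are `(ε,0)`-indistinguishable, i.e.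
`Pr_{P|Bᶜ}[S] ≤ e^ε Pr_{Q|Bᶜ}[S]` and `Pr_{Q|Bᶜ}[S] ≤ e^ε Pr_{P|Bᶜ}[S]` for all
measurable `S`.  Then for every measurable `S`, `Pr_P[S] ≤ e^ε·Pr_Q[S] + δ`. -/
theorem stmt4 {α : Type*} [MeasurableSpace α]
    (P Q : Measure α) [IsProbabilityMeasure P] [IsProbabilityMeasure Q]
    (ε δ : ℝ) (B : Set α) (hB : MeasurableSet B)
    (hPB : (P B).toReal ≤ δ)
    (hcond : ∀ S : Set α, MeasurableSet S →
      ((P.restrict Bᶜ) S).toReal ≤ Real.exp ε * ((Q.restrict Bᶜ) S).toReal ∧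
      ((Q.restrict Bᶜ) S).toReal ≤ Real.exp ε * ((P.restrict Bᶜ) S).toReal) :
    ∀ S : Set α, MeasurableSet S → (P S).toReal ≤ Real.exp ε * (Q S).toReal + δ := by
  intro S hS
  have hfinP : ∀ T : Set α, P T ≠ ⊤ := fun T => measure_ne_top P T
  have hfinQ : ∀ T : Set α, Q T ≠ ⊤ := fun T => measure_ne_top Q T
  have hsplit : (P S).toReal ≤ (P (S ∩ Bᶜ)).toReal + (P B).toReal := by
    have h1 : P S ≤ P (S ∩ Bᶜ) + P B := by
      calc P S ≤ P ((S ∩ Bᶜ) ∪ B) := by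
            apply measure_mono
            intro x hx
            by_cases hxB : x ∈ B
            · exact Or.inr hxB
            · exact Or.inl ⟨hx, hxB⟩
        _ ≤ P (S ∩ Bᶜ) + P B := measure_union_le _ _
    have := ENNReal.toReal_mono (by simp [hfinP]) h1
    rwa [ENNReal.toReal_add (hfinP _) (hfinP _)] at this
  have hrestr : (P.restrict Bᶜ) S = P (S ∩ Bᶜ) := Measure.restrict_apply hS
  have hrestrQ : (Q.restrict Bᶜ) S = Q (S ∩ Bᶜ) := Measure.restrict_apply hS
  have h2 := (hcond S hS).1
  rw [hrestr, hrestrQ] at h2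
  have h3 : (Q (S ∩ Bᶜ)).toReal ≤ (Q S).toReal :=
    ENNReal.toReal_mono (hfinQ _) (measure_mono Set.inter_subset_left)
  have hexp : (0:ℝ) ≤ Real.exp ε := (Real.exp_pos ε).le
  nlinarith [hsplit, h2, h3, hPB]
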